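/- Let A, B > 0 and define F(r) = (1/(2B))·log((1 + (r/A)^{1/4})/(1 − (r/A)^{1/4})) for 0 < r < A. Then at r₀ = 9A/25 and t₀ = 25√15/(72 A B) the conditions t₀ − F'(r₀) = 0 and F''(r₀) = 0 hold, and F'''(r₀) = 78125√15/(31104 A³ B). -/

import Mathlib

open Real Filter Set

private lemma stmt9_pow_q (s : ℝ) (hs : 0 < s) (n : ℕ) :
    s ^ ((n : ℝ) / 4) = (s ^ ((1 : ℝ) / 4)) ^ n := by
  rw [show ((n : ℝ) / 4) = (1 : ℝ) / 4 * n by ring, Real.rpow_mul hs.le, Real.rpow_natCast]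

private lemma stmt9_pow_qneg (s : ℝ) (hs : 0 < s) (n : ℕ) :
    s ^ (-(n : ℝ) / 4) = ((s ^ ((1 : ℝ) / 4)) ^ n)⁻¹ := by
  rw [neg_div, Real.rpow_neg hs.le, stmt9_pow_q s hs n]

noncomputable def stmt9G1 (s : ℝ) : ℝ :=
  1 / 2 * s ^ (-(3 : ℝ) / 4) * (1 - s ^ ((1 : ℝ) / 2))⁻¹

noncomputable def stmt9G2 (s : ℝ) : ℝ :=
  1 / 8 * s ^ (-(7 : ℝ) / 4) * (5 * s ^ ((1 : ℝ) / 2) - 3) * ((1 - s ^ ((1 : ℝ) / 2))⁻¹) ^ 2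

private lemma stmt9_q_mem {s : ℝ} (hs : s ∈ Set.Ioo (0 : ℝ) 1) :
    0 < s ^ ((1 : ℝ) / 4) ∧ s ^ ((1 : ℝ) / 4) < 1 :=
  ⟨Real.rpow_pos_of_pos hs.1 _, Real.rpow_lt_one hs.1.le hs.2 (by norm_num)⟩

private lemma stmt9_e12 {s : ℝ} (hs : 0 < s) :
    s ^ ((1 : ℝ) / 2) = (s ^ ((1 : ℝ) / 4)) ^ 2 := by
  rw [show (1 : ℝ) / 2 = ((2 : ℕ) : ℝ) / 4 by norm_num, stmt9_pow_q s hs 2]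

private lemma stmt9_hq14 {s : ℝ} (hs : 0 < s) :
    HasDerivAt (fun s : ℝ => s ^ ((1 : ℝ) / 4)) (1 / 4 * s ^ (-(3 : ℝ) / 4)) s := by
  have h := Real.hasDerivAt_rpow_const (x := s) (p := (1 : ℝ) / 4) (Or.inl hs.ne')
  rw [show (-(3 : ℝ) / 4) = (1 : ℝ) / 4 - 1 by norm_num]
  simpa using h

private lemma stmt9_hq12 {s : ℝ} (hs : 0 < s) :
    HasDerivAt (fun s : ℝ => s ^ ((1 : ℝ) / 2)) (1 / 2 * s ^ (-(1 : ℝ) / 2)) s := by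
  have h := Real.hasDerivAt_rpow_const (x := s) (p := (1 : ℝ) / 2) (Or.inl hs.ne')
  rw [show (-(1 : ℝ) / 2) = (1 : ℝ) / 2 - 1 by norm_num]
  simpa using h

private lemma stmt9_hG0 {s : ℝ} (hs : s ∈ Set.Ioo (0 : ℝ) 1) :
    HasDerivAt (fun s : ℝ =>
      Real.log ((1 + s ^ ((1 : ℝ) / 4)) / (1 - s ^ ((1 : ℝ) / 4)))) (stmt9G1 s) s := by
  obtain ⟨hq, hq1⟩ := stmt9_q_mem hs
  set q := s ^ ((1 : ℝ) / 4) with hqdef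
  have h1 : HasDerivAt (fun s : ℝ => Real.log (1 + s ^ ((1 : ℝ) / 4)))
      ((0 + 1 / 4 * s ^ (-(3 : ℝ) / 4)) / (1 + q)) s :=
    ((hasDerivAt_const s (1 : ℝ)).add (stmt9_hq14 hs.1)).log (by
      have : (0:ℝ) < 1 + q := by linarith
      exact this.ne')
  have h2 : HasDerivAt (fun s : ℝ => Real.log (1 - s ^ ((1 : ℝ) / 4)))
      ((0 - 1 / 4 * s ^ (-(3 : ℝ) / 4)) / (1 - q)) s :=
    ((hasDerivAt_const s (1 : ℝ)).sub (stmt9_hq14 hs.1)).log (by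
      have : (0:ℝ) < 1 - q := by linarith
      exact this.ne')
  have hd := h1.sub h2
  have hev : (fun s : ℝ =>
      Real.log ((1 + s ^ ((1 : ℝ) / 4)) / (1 - s ^ ((1 : ℝ) / 4)))) =ᶠ[nhds s]
      (fun s : ℝ => Real.log (1 + s ^ ((1 : ℝ) / 4)) - Real.log (1 - s ^ ((1 : ℝ) / 4))) := by
    filter_upwards [isOpen_Ioo.mem_nhds hs] with t ht
    obtain ⟨hqt, hqt1⟩ := stmt9_q_mem ht
    rw [Real.log_div (by positivity) (by nlinarith)]
  have hd2 := hd.congr_of_eventuallyEq hev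
  refine hd2.congr_deriv ?_
  have e3 : s ^ (-(3 : ℝ) / 4) = (q ^ 3)⁻¹ := by
    rw [show -(3 : ℝ) / 4 = -((3 : ℕ) : ℝ) / 4 by norm_num]
    exact stmt9_pow_qneg s hs.1 3
  rw [stmt9G1, stmt9_e12 hs.1, e3, ← hqdef]
  have h1q : (1 : ℝ) - q ≠ 0 := by nlinarith
  have h1q' : (1 : ℝ) + q ≠ 0 := by positivity
  have h1q2 : (1 : ℝ) - q ^ 2 ≠ 0 := by nlinarith
  field_simp [hq.ne', h1q, h1q', h1q2]
  ring

private lemma stmt9_hG1 {s : ℝ} (hs : s ∈ Set.Ioo (0 : ℝ) 1) :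
    HasDerivAt stmt9G1 (stmt9G2 s) s := by
  obtain ⟨hq, hq1⟩ := stmt9_q_mem hs
  set q := s ^ ((1 : ℝ) / 4) with hqdef
  have hw1 : (1:ℝ) - s ^ ((1 : ℝ) / 2) ≠ 0 := by
    rw [stmt9_e12 hs.1, ← hqdef]; nlinarith
  have ha : HasDerivAt (fun s : ℝ => s ^ (-(3 : ℝ) / 4))
      (-(3 : ℝ) / 4 * s ^ (-(7 : ℝ) / 4)) s := by
    have h := Real.hasDerivAt_rpow_const (x := s) (p := -(3 : ℝ) / 4) (Or.inl hs.1.ne')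
    rw [show (-(7 : ℝ) / 4) = -(3 : ℝ) / 4 - 1 by norm_num]
    exact h
  have hinv : HasDerivAt (fun s : ℝ => (1 - s ^ ((1 : ℝ) / 2))⁻¹)
      (-(0 - 1 / 2 * s ^ (-(1 : ℝ) / 2)) / (1 - s ^ ((1 : ℝ) / 2)) ^ 2) s :=
    ((hasDerivAt_const s (1 : ℝ)).sub (stmt9_hq12 hs.1)).inv hw1
  have hd := ((ha.const_mul (1 / 2 : ℝ)).mul hinv)
  have heq : stmt9G1 = fun s : ℝ =>
      (1 / 2 * s ^ (-(3 : ℝ) / 4)) * (1 - s ^ ((1 : ℝ) / 2))⁻¹ := rfl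
  rw [heq]
  refine hd.congr_deriv ?_
  have e3 : s ^ (-(3 : ℝ) / 4) = (q ^ 3)⁻¹ := by
    rw [show -(3 : ℝ) / 4 = -((3 : ℕ) : ℝ) / 4 by norm_num]; exact stmt9_pow_qneg s hs.1 3
  have e7 : s ^ (-(7 : ℝ) / 4) = (q ^ 7)⁻¹ := by
    rw [show -(7 : ℝ) / 4 = -((7 : ℕ) : ℝ) / 4 by norm_num]; exact stmt9_pow_qneg s hs.1 7
  have e2 : s ^ (-(1 : ℝ) / 2) = (q ^ 2)⁻¹ := by
    rw [show -(1 : ℝ) / 2 = -((2 : ℕ) : ℝ) / 4 by norm_num]; exact stmt9_pow_qneg s hs.1 2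
  rw [stmt9G2, stmt9_e12 hs.1, e3, e7, e2, ← hqdef]
  have h1q2 : (1 : ℝ) - q ^ 2 ≠ 0 := by nlinarith
  field_simp
  ring

private lemma stmt9_sqrt15_sq : Real.sqrt 15 ^ 2 = 15 :=
  Real.sq_sqrt (by norm_num)

private lemma stmt9_q0 : ((9 : ℝ) / 25) ^ ((1 : ℝ) / 4) = Real.sqrt 15 / 5 := by
  have h4 : (Real.sqrt 15 / 5) ^ (4 : ℕ) = (9 : ℝ) / 25 := by
    have : Real.sqrt 15 ^ (4 : ℕ) = 225 := by
      calc Real.sqrt 15 ^ (4 : ℕ) = (Real.sqrt 15 ^ 2) ^ 2 := by ring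
      _ = 225 := by rw [stmt9_sqrt15_sq]; norm_num
    rw [div_pow, this]; norm_num
  rw [← h4, show (1 : ℝ) / 4 = ((4 : ℕ) : ℝ)⁻¹ by norm_num]
  exact Real.pow_rpow_inv_natCast (by positivity) (by norm_num)

private lemma stmt9_w0 : ((9 : ℝ) / 25) ^ ((1 : ℝ) / 2) = 3 / 5 := by
  rw [stmt9_e12 (by norm_num : (0:ℝ) < 9/25), stmt9_q0, div_pow, stmt9_sqrt15_sq]
  norm_num

private lemma stmt9_pq (n : ℕ) : ((9 : ℝ) / 25) ^ (-(n : ℝ) / 4) = ((Real.sqrt 15 / 5) ^ n)⁻¹ := by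
  rw [stmt9_pow_qneg _ (by norm_num) n, stmt9_q0]

private lemma stmt9_p34 : ((9 : ℝ) / 25) ^ (-(3 : ℝ) / 4) = 5 * Real.sqrt 15 / 9 := by
  rw [show -(3 : ℝ) / 4 = -((3 : ℕ) : ℝ) / 4 by norm_num, stmt9_pq 3]
  have ht : Real.sqrt 15 ≠ 0 := by positivity
  have h3 : Real.sqrt 15 ^ 3 = 15 * Real.sqrt 15 := by
    calc Real.sqrt 15 ^ 3 = Real.sqrt 15 ^ 2 * Real.sqrt 15 := by ring
    _ = _ := by rw [stmt9_sqrt15_sq]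
  rw [div_pow, h3]
  rw [inv_div, div_eq_div_iff (by positivity) (by norm_num)]
  nlinarith [stmt9_sqrt15_sq]

private lemma stmt9_p74 : ((9 : ℝ) / 25) ^ (-(7 : ℝ) / 4) = 125 * Real.sqrt 15 / 81 := by
  rw [show -(7 : ℝ) / 4 = -((7 : ℕ) : ℝ) / 4 by norm_num, stmt9_pq 7]
  have h7 : Real.sqrt 15 ^ 7 = 3375 * Real.sqrt 15 := by
    calc Real.sqrt 15 ^ 7 = (Real.sqrt 15 ^ 2) ^ 3 * Real.sqrt 15 := by ring
    _ = _ := by rw [stmt9_sqrt15_sq]; norm_num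
  rw [div_pow, h7, inv_div, div_eq_div_iff (by positivity) (by norm_num)]
  nlinarith [stmt9_sqrt15_sq]

private lemma stmt9_p114 : ((9 : ℝ) / 25) ^ (-(11 : ℝ) / 4) = 3125 * Real.sqrt 15 / 729 := by
  rw [show -(11 : ℝ) / 4 = -((11 : ℕ) : ℝ) / 4 by norm_num, stmt9_pq 11]
  have h11 : Real.sqrt 15 ^ 11 = 759375 * Real.sqrt 15 := by
    calc Real.sqrt 15 ^ 11 = (Real.sqrt 15 ^ 2) ^ 5 * Real.sqrt 15 := by ring
    _ = _ := by rw [stmt9_sqrt15_sq]; norm_num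
  rw [div_pow, h11, inv_div, div_eq_div_iff (by positivity) (by norm_num)]
  nlinarith [stmt9_sqrt15_sq]

private lemma stmt9_p12 : ((9 : ℝ) / 25) ^ (-(1 : ℝ) / 2) = 5 / 3 := by
  rw [show -(1 : ℝ) / 2 = -((2 : ℕ) : ℝ) / 4 by norm_num, stmt9_pq 2, div_pow, stmt9_sqrt15_sq]
  norm_num

private lemma stmt9_G1_val : stmt9G1 (9 / 25) = 25 * Real.sqrt 15 / 36 := by
  rw [stmt9G1, stmt9_p34, stmt9_w0]
  ring

private lemma stmt9_G2_val : stmt9G2 (9 / 25) = 0 := by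
  rw [stmt9G2, stmt9_w0]
  norm_num

private lemma stmt9_hG2 :
    HasDerivAt stmt9G2 (78125 * Real.sqrt 15 / 15552) (9 / 25) := by
  have hs : (9 / 25 : ℝ) ∈ Set.Ioo (0 : ℝ) 1 := by norm_num
  have h925 : (0 : ℝ) < 9 / 25 := by norm_num
  have ha : HasDerivAt (fun s : ℝ => s ^ (-(7 : ℝ) / 4))
      (-(7 : ℝ) / 4 * ((9:ℝ)/25) ^ (-(11 : ℝ) / 4)) (9/25) := by
    have h := Real.hasDerivAt_rpow_const (x := (9/25:ℝ)) (p := -(7 : ℝ) / 4)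
      (Or.inl (by norm_num))
    rw [show (-(11 : ℝ) / 4) = -(7 : ℝ) / 4 - 1 by norm_num]
    exact h
  have hw1 : (1:ℝ) - ((9:ℝ)/25) ^ ((1 : ℝ) / 2) ≠ 0 := by rw [stmt9_w0]; norm_num
  have hb : HasDerivAt (fun s : ℝ => 5 * s ^ ((1 : ℝ) / 2) - 3)
      (5 * (1 / 2 * ((9:ℝ)/25) ^ (-(1 : ℝ) / 2)) - 0) (9/25) :=
    (((stmt9_hq12 h925).const_mul 5).sub (hasDerivAt_const _ _))
  have hinv : HasDerivAt (fun s : ℝ => (1 - s ^ ((1 : ℝ) / 2))⁻¹)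
      (-(0 - 1 / 2 * ((9:ℝ)/25) ^ (-(1 : ℝ) / 2)) / (1 - ((9:ℝ)/25) ^ ((1 : ℝ) / 2)) ^ 2)
      (9/25) :=
    ((hasDerivAt_const _ (1 : ℝ)).sub (stmt9_hq12 h925)).inv hw1
  have hc := hinv.pow 2
  have hd := (((ha.const_mul (1/8 : ℝ)).mul hb).mul hc)
  have heq : stmt9G2 = fun s : ℝ =>
      ((1 / 8 * s ^ (-(7 : ℝ) / 4)) * (5 * s ^ ((1 : ℝ) / 2) - 3)) *
        ((1 - s ^ ((1 : ℝ) / 2))⁻¹) ^ 2 := by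
    funext s; rw [stmt9G2]
  rw [heq]
  refine hd.congr_deriv ?_
  simp only [Pi.mul_apply, Pi.pow_apply]
  rw [stmt9_w0, stmt9_p74, stmt9_p114, stmt9_p12]
  push_cast
  ring

theorem stmt9 (A B : ℝ) (hA : 0 < A) (hB : 0 < B)
    (F : ℝ → ℝ)
    (hF : F = fun r => (1 / (2 * B)) *
      Real.log ((1 + (r / A) ^ ((1 : ℝ) / 4)) / (1 - (r / A) ^ ((1 : ℝ) / 4)))) :
    25 * Real.sqrt 15 / (72 * A * B) - deriv F (9 * A / 25) = 0 ∧
    deriv (deriv F) (9 * A / 25) = 0 ∧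
    deriv (deriv (deriv F)) (9 * A / 25)
      = 78125 * Real.sqrt 15 / (31104 * A ^ 3 * B) := by
  have hr0 : (9 * A / 25) ∈ Set.Ioo (0 : ℝ) A := by
    constructor <;> nlinarith
  have hr0A : (9 * A / 25) / A = 9 / 25 := by field_simp
  have hmem : ∀ r ∈ Set.Ioo (0 : ℝ) A, r / A ∈ Set.Ioo (0 : ℝ) 1 := fun r hr =>
    ⟨div_pos hr.1 hA, (div_lt_one hA).2 hr.2⟩
  have hdiv : ∀ r : ℝ, HasDerivAt (fun x : ℝ => x / A) (1 / A) r := fun r =>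
    (hasDerivAt_id r).div_const A
  -- first derivative
  have hF1 : ∀ r ∈ Set.Ioo (0 : ℝ) A,
      HasDerivAt F (1 / (2 * B) * (stmt9G1 (r / A) * (1 / A))) r := by
    intro r hr
    have h0 := (stmt9_hG0 (hmem r hr)).comp r (hdiv r)
    have h1 := h0.const_mul (1 / (2 * B))
    rw [hF]
    simpa [Function.comp] using h1
  set D1 : ℝ → ℝ := fun r => 1 / (2 * B) * (stmt9G1 (r / A) * (1 / A)) with hD1def
  have hderiv1 : Set.EqOn (deriv F) D1 (Set.Ioo 0 A) := fun r hr => (hF1 r hr).deriv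
  -- second derivative
  have hD1 : ∀ r ∈ Set.Ioo (0 : ℝ) A,
      HasDerivAt D1 (1 / (2 * B) * (stmt9G2 (r / A) * (1 / A) * (1 / A))) r := by
    intro r hr
    have h0 := (stmt9_hG1 (hmem r hr)).comp r (hdiv r)
    have h1 := (h0.mul_const (1 / A)).const_mul (1 / (2 * B))
    simpa [Function.comp, hD1def] using h1
  set D2 : ℝ → ℝ := fun r => 1 / (2 * B) * (stmt9G2 (r / A) * (1 / A) * (1 / A)) with hD2def
  have hderiv2 : Set.EqOn (deriv (deriv F)) D2 (Set.Ioo 0 A) := by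
    intro r hr
    have hev : deriv F =ᶠ[nhds r] D1 :=
      Filter.eventuallyEq_of_mem (isOpen_Ioo.mem_nhds hr) hderiv1
    rw [hev.deriv_eq]
    exact (hD1 r hr).deriv
  -- third derivative
  have hD2 : HasDerivAt D2
      (1 / (2 * B) * (78125 * Real.sqrt 15 / 15552 * (1 / A) * (1 / A) * (1 / A)))
      (9 * A / 25) := by
    have hg2 : HasDerivAt stmt9G2 (78125 * Real.sqrt 15 / 15552) ((9 * A / 25) / A) := by
      rw [hr0A]; exact stmt9_hG2
    have h0 := hg2.comp (9 * A / 25) (hdiv _)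
    have h1 := ((h0.mul_const (1 / A)).mul_const (1 / A)).const_mul (1 / (2 * B))
    have h2 : HasDerivAt (fun r => 1 / (2 * B) * (stmt9G2 (r / A) * (1 / A) * (1 / A)))
        (1 / (2 * B) * (78125 * Real.sqrt 15 / 15552 * (1 / A) * (1 / A) * (1 / A)))
        (9 * A / 25) := by
      exact h1
    simpa [hD2def] using h2
  have hev2 : deriv (deriv F) =ᶠ[nhds (9 * A / 25)] D2 :=
    Filter.eventuallyEq_of_mem (isOpen_Ioo.mem_nhds hr0) hderiv2
  have hthird : deriv (deriv (deriv F)) (9 * A / 25)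
      = 1 / (2 * B) * (78125 * Real.sqrt 15 / 15552 * (1 / A) * (1 / A) * (1 / A)) := by
    rw [hev2.deriv_eq]
    exact hD2.deriv
  refine ⟨?_, ?_, ?_⟩
  · rw [hderiv1 hr0, hD1def]
    simp only [hr0A, stmt9_G1_val]
    field_simp
    ring
  · rw [hderiv2 hr0, hD2def]
    simp only [hr0A, stmt9_G2_val]
    ring
  · rw [hthird]
    field_simp
    ring
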